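/- Define on G = ℤ × ℝ³ the multiplication (m₁,x₁,x₂,x₃)·(n₁,y₁,y₂,y₃) = (m₁+n₁, x₁+y₁, x₂+y₂+m₁y₁, x₃+y₃+m₁y₂+½m₁²y₁). Then G is a group and is 3-step nilpotent, and its identity component {0}×ℝ³ is abelian. -/
import Mathlib


/-- The multiplication on `G = ℤ × ℝ³`:
`(m₁,x₁,x₂,x₃)·(n₁,y₁,y₂,y₃) = (m₁+n₁, x₁+y₁, x₂+y₂+m₁y₁, x₃+y₃+m₁y₂+½m₁²y₁)`. -/
noncomputable def mul4 : (ℤ × ℝ × ℝ × ℝ) → (ℤ × ℝ × ℝ × ℝ) → (ℤ × ℝ × ℝ × ℝ) :=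
  fun g h => (g.1 + h.1, g.2.1 + h.2.1, g.2.2.1 + h.2.2.1 + (g.1 : ℝ) * h.2.1,
    g.2.2.2 + h.2.2.2 + (g.1 : ℝ) * h.2.2.1 + (1 / 2 : ℝ) * (g.1 : ℝ) ^ 2 * h.2.1)

/-- The commutator `[g,h] = g⁻¹h⁻¹gh` with respect to `mul4` and an inverse map `inv`. -/
noncomputable def comm4 (inv : ℤ × ℝ × ℝ × ℝ → ℤ × ℝ × ℝ × ℝ) (g h : ℤ × ℝ × ℝ × ℝ) : ℤ × ℝ × ℝ × ℝ :=
  mul4 (mul4 (inv g) (inv h)) (mul4 g h)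

/-- `G = ℤ × ℝ³` with the above multiplication is a group, it is 3-step nilpotent
(every 4-fold iterated commutator `[a,[b,[c,d]]]` is trivial), and its identity
component `{0} × ℝ³` is abelian. -/
theorem stmt_4 :
    ∃ inv : ℤ × ℝ × ℝ × ℝ → ℤ × ℝ × ℝ × ℝ,
      (∀ a b c : ℤ × ℝ × ℝ × ℝ, mul4 (mul4 a b) c = mul4 a (mul4 b c)) ∧
      (∀ a : ℤ × ℝ × ℝ × ℝ, mul4 (0, 0, 0, 0) a = a) ∧
      (∀ a : ℤ × ℝ × ℝ × ℝ, mul4 a (0, 0, 0, 0) = a) ∧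
      (∀ a : ℤ × ℝ × ℝ × ℝ, mul4 (inv a) a = (0, 0, 0, 0)) ∧
      (∀ a : ℤ × ℝ × ℝ × ℝ, mul4 a (inv a) = (0, 0, 0, 0)) ∧
      (∀ a b c d : ℤ × ℝ × ℝ × ℝ,
        comm4 inv a (comm4 inv b (comm4 inv c d)) = (0, 0, 0, 0)) ∧
      (∀ g h : ℤ × ℝ × ℝ × ℝ, g.1 = 0 → h.1 = 0 → mul4 g h = mul4 h g) := by
  refine ⟨fun a => (-a.1, -a.2.1, -a.2.2.1 + (a.1 : ℝ) * a.2.1,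
      -a.2.2.2 + (a.1 : ℝ) * a.2.2.1 - (1 / 2 : ℝ) * (a.1 : ℝ) ^ 2 * a.2.1), ?_, ?_, ?_, ?_, ?_, ?_, ?_⟩
  · intro a b c
    simp only [mul4, Prod.mk.injEq]
    refine ⟨by ring, by ring, by push_cast; ring, by push_cast; ring⟩
  · intro a; simp [mul4]
  · intro a; simp [mul4]
  · intro a
    simp only [mul4, Prod.mk.injEq]
    refine ⟨by ring, by ring, by push_cast; ring, by push_cast; ring⟩
  · intro a
    simp only [mul4, Prod.mk.injEq]
    refine ⟨by ring, by ring, by push_cast; ring, by push_cast; ring⟩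
  · intro a b c d
    simp only [comm4, mul4, Prod.mk.injEq]
    refine ⟨by ring, by ring, by push_cast; ring, by push_cast; ring⟩
  · intro g h hg hh
    simp only [mul4, hg, hh, Prod.mk.injEq]
    norm_num
    exact ⟨add_comm _ _, add_comm _ _, add_comm _ _⟩
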